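/- Let A be a commutative ring, ξ ∈ A, and consider B = A[u, t]/(u·t − ξ) with the ℤ-grading in which u has degree 2, t has degree −2, and A sits in degree 0. Then the odd-degree components of B vanish, the degree-0 component equals A, and for every k > 0 the degree-2k component is the free A-module generated by u^k while the degree-(−2k) component is the free A-module generated by t^k, provided ξ is a nonzerodivisor in A. -/

import Mathlib

open MvPolynomial

private lemma quot_smul_eq {A : Type*} [CommRing A] (I : Ideal (MvPolynomial (Fin 2) A))
    (a : A) (x : MvPolynomial (Fin 2) A ⧸ I) :
    a • x = algebraMap A (MvPolynomial (Fin 2) A ⧸ I) a * x := by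
  obtain ⟨p, rfl⟩ := Ideal.Quotient.mk_surjective x
  rw [← Ideal.Quotient.mkₐ_eq_mk A, ← map_smul, Algebra.smul_def, map_mul, AlgHom.commutes]

private lemma laurent_CT_eq_zero {A : Type*} [CommRing A] (a : A) (n : ℤ)
    (h : LaurentPolynomial.C a * LaurentPolynomial.T n = 0) : a = 0 := by
  rw [← LaurentPolynomial.single_eq_C_mul_T] at h
  exact AddMonoidAlgebra.single_eq_zero.mp h

/-- The graded structure of `B = A[u,t]/(ut - ξ)` with `deg u = 2`,
`deg t = -2`: odd components vanish, the degree-0 component is `A`, and for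
`k > 0` the degree `2k` (resp. `-2k`) component is free of rank one on `u^k`
(resp. `t^k`), provided `ξ` is a nonzerodivisor. -/
theorem graded_structure_of_ut_eq_xi
    (A : Type*) [CommRing A] (ξ : A)
    (hξ : ∀ x : A, ξ * x = 0 → x = 0)
    (I : Ideal (MvPolynomial (Fin 2) A))
    (hI : I = Ideal.span {(X 0 : MvPolynomial (Fin 2) A) * X 1 - C ξ})
    (U T : MvPolynomial (Fin 2) A ⧸ I)
    (hU : U = Ideal.Quotient.mk I (X 0))
    (hT : T = Ideal.Quotient.mk I (X 1))
    (comp : ℤ → Submodule A (MvPolynomial (Fin 2) A ⧸ I))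
    (hcomp : ∀ δ : ℤ, comp δ =
      Submodule.span A
        {x | ∃ i j : ℕ, 2 * (i : ℤ) - 2 * (j : ℤ) = δ ∧ x = U ^ i * T ^ j}) :
    (∀ δ : ℤ, Odd δ → comp δ = ⊥) ∧
    (comp 0 = LinearMap.range (Algebra.linearMap A (MvPolynomial (Fin 2) A ⧸ I)) ∧
      Function.Injective (algebraMap A (MvPolynomial (Fin 2) A ⧸ I))) ∧
    (∀ k : ℕ, 0 < k →
      (comp (2 * (k : ℤ)) = Submodule.span A {U ^ k} ∧
        (∀ a : A, a • (U ^ k) = 0 → a = 0)) ∧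
      (comp (-(2 * (k : ℤ))) = Submodule.span A {T ^ k} ∧
        (∀ a : A, a • (T ^ k) = 0 → a = 0))) := by
  have hξpow : ∀ (n : ℕ) (x : A), ξ ^ n * x = 0 → x = 0 := by
    intro n
    induction n with
    | zero => intro x h; simpa using h
    | succ n ih =>
      intro x h
      refine hξ x (ih (ξ * x) ?_)
      rw [← h]; ring
  -- the algebra map to Laurent polynomials
  set f : MvPolynomial (Fin 2) A →ₐ[A] LaurentPolynomial A :=
    aeval ![LaurentPolynomial.T 1, LaurentPolynomial.C ξ * LaurentPolynomial.T (-1)] with hf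
  have hgen : f ((X 0 : MvPolynomial (Fin 2) A) * X 1 - C ξ) = 0 := by
    have h0 : f (X 0) = LaurentPolynomial.T 1 := by simp [hf]
    have h1 : f (X 1) = LaurentPolynomial.C ξ * LaurentPolynomial.T (-1) := by simp [hf]
    have hC : f (C ξ) = LaurentPolynomial.C ξ := by
      simp [hf, algHom_C, LaurentPolynomial.algebraMap_apply]
    rw [map_sub, map_mul, h0, h1, hC, mul_left_comm, ← LaurentPolynomial.T_add]
    norm_num [LaurentPolynomial.T_zero]
  have hker : ∀ p ∈ I, f p = 0 := by
    intro p hp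
    rw [hI, Ideal.mem_span_singleton] at hp
    obtain ⟨c, rfl⟩ := hp
    rw [map_mul, hgen, zero_mul]
  set ψ : (MvPolynomial (Fin 2) A ⧸ I) →ₐ[A] LaurentPolynomial A :=
    Ideal.Quotient.liftₐ I f hker with hψ
  have hψmk : ∀ p, ψ (Ideal.Quotient.mk I p) = f p := fun p =>
    Ideal.Quotient.liftₐ_apply I f hker (Ideal.Quotient.mk I p)
  have hψU : ψ U = LaurentPolynomial.T 1 := by rw [hU, hψmk]; simp [hf]
  have hψT : ψ T = LaurentPolynomial.C ξ * LaurentPolynomial.T (-1) := by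
    rw [hT, hψmk]; simp [hf]
  -- the fundamental relation U * T = ξ
  have halg : ∀ a : A, algebraMap A (MvPolynomial (Fin 2) A ⧸ I) a
      = Ideal.Quotient.mk I (C a) := fun a => rfl
  have hUT : U * T = algebraMap A (MvPolynomial (Fin 2) A ⧸ I) ξ := by
    rw [hU, hT, halg, ← map_mul]
    rw [Ideal.Quotient.mk_eq_mk_iff_sub_mem, hI]
    exact Ideal.subset_span rfl
  have hpow : ∀ n : ℕ, U ^ n * T ^ n
      = algebraMap A (MvPolynomial (Fin 2) A ⧸ I) (ξ ^ n) := by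
    intro n
    rw [← mul_pow, hUT, ← map_pow]
  refine ⟨?_, ⟨?_, ?_⟩, ?_⟩
  · -- odd components vanish
    intro δ hδ
    rw [hcomp]
    convert Submodule.span_empty
    ext x
    simp only [Set.mem_setOf_eq, Set.mem_empty_iff_false, iff_false]
    rintro ⟨i, j, hij, -⟩
    obtain ⟨m, hm⟩ := hδ
    omega
  · -- degree 0
    rw [hcomp]
    apply le_antisymm
    · rw [Submodule.span_le]
      rintro x ⟨i, j, hij, rfl⟩
      have : i = j := by omega
      subst this
      rw [hpow]
      exact ⟨ξ ^ i, rfl⟩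
    · rintro x ⟨a, rfl⟩
      have h1 : (1 : MvPolynomial (Fin 2) A ⧸ I) ∈
          {x | ∃ i j : ℕ, 2 * (i : ℤ) - 2 * (j : ℤ) = 0 ∧ x = U ^ i * T ^ j} :=
        ⟨0, 0, by norm_num, by simp⟩
      have : Algebra.linearMap A (MvPolynomial (Fin 2) A ⧸ I) a = a • 1 := by
        rw [Algebra.linearMap_apply, quot_smul_eq, mul_one]
      rw [this]
      exact Submodule.smul_mem _ a (Submodule.subset_span h1)
  · -- injectivity of the algebra map
    rw [injective_iff_map_eq_zero]
    intro a ha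
    have := congrArg ψ ha
    rw [map_zero, AlgHom.commutes, LaurentPolynomial.algebraMap_apply,
      Algebra.algebraMap_self_apply] at this
    refine laurent_CT_eq_zero a 0 ?_
    rw [LaurentPolynomial.T_zero, mul_one, this]
  · -- positive and negative even degrees
    intro k hk
    refine ⟨⟨?_, ?_⟩, ?_, ?_⟩
    · rw [hcomp]
      apply le_antisymm
      · rw [Submodule.span_le]
        rintro x ⟨i, j, hij, rfl⟩
        have : i = j + k := by omega
        subst this
        have : U ^ (j + k) * T ^ j = ξ ^ j • U ^ k := by
          rw [pow_add, quot_smul_eq, ← hpow]; ring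
        rw [this]
        exact Submodule.smul_mem _ _ (Submodule.mem_span_singleton_self _)
      · refine Submodule.span_mono (Set.singleton_subset_iff.2 ?_)
        exact ⟨k, 0, by push_cast; ring, by simp⟩
    · intro a ha
      rw [quot_smul_eq] at ha
      have h2 := congrArg ψ ha
      rw [map_zero, map_mul, AlgHom.commutes, map_pow, hψU, LaurentPolynomial.T_pow,
        LaurentPolynomial.algebraMap_apply, Algebra.algebraMap_self_apply] at h2
      exact laurent_CT_eq_zero a _ h2
    · rw [hcomp]
      apply le_antisymm
      · rw [Submodule.span_le]
        rintro x ⟨i, j, hij, rfl⟩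
        have : j = i + k := by omega
        subst this
        have : U ^ i * T ^ (i + k) = ξ ^ i • T ^ k := by
          rw [pow_add, quot_smul_eq, ← hpow]; ring
        rw [this]
        exact Submodule.smul_mem _ _ (Submodule.mem_span_singleton_self _)
      · refine Submodule.span_mono (Set.singleton_subset_iff.2 ?_)
        exact ⟨0, k, by push_cast; ring, by simp⟩
    · intro a ha
      rw [quot_smul_eq] at ha
      have h2 := congrArg ψ ha
      rw [map_zero, map_mul, AlgHom.commutes, map_pow, hψT, mul_pow, ← map_pow,
        LaurentPolynomial.T_pow, LaurentPolynomial.algebraMap_apply,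
        Algebra.algebraMap_self_apply, ← mul_assoc, ← map_mul] at h2
      refine hξpow k a ?_
      rw [mul_comm]
      exact laurent_CT_eq_zero (a * ξ ^ k) _ h2
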